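/- Let N ∈ ℝ with N ≥ 3, let d > 0 be real, and let μ be the limit measure associated with the dilation N and digit set {0,d}. Then for all real numbers a ≤ b, μ([a,b]) ≤ μ([0, b − a]). -/

import Mathlib

open MeasureTheory
open scoped ENNReal

/-- The measure `μ = sup_k μ_k`, where
`μ_k = Σ_{ℓ_0,…,ℓ_{k−1} ∈ {0,d}} δ_{ℓ_0 + N ℓ_1 + ⋯ + N^{k−1} ℓ_{k−1}}` (sum over all
`k`-tuples from the digit set `{0, d}`, counted with multiplicity). -/
noncomputable def cantorMeasure (N d : ℝ) : Measure ℝ :=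
  ⨆ k : ℕ, Measure.sum (fun ℓ : Fin k → ({0, d} : Finset ℝ) =>
    Measure.dirac (∑ j : Fin k, N ^ (j : ℕ) * (ℓ j : ℝ)))

section
variable {N d : ℝ}

noncomputable def cS (N d : ℝ) (k : ℕ) (ℓ : Fin k → ({0, d} : Finset ℝ)) : ℝ :=
  ∑ j : Fin k, N ^ (j : ℕ) * (ℓ j : ℝ)

noncomputable def cT (N d : ℝ) (k : ℕ) (s : Set ℝ) : ℝ≥0∞ :=
  ∑ ℓ : Fin k → ({0, d} : Finset ℝ), s.indicator 1 (cS N d k ℓ)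

lemma digit_mem (y : ({0, d} : Finset ℝ)) : (y : ℝ) = 0 ∨ (y : ℝ) = d := by
  have h := y.2
  rw [Finset.mem_insert, Finset.mem_singleton] at h
  exact h

lemma geomSum_le_half (hN : 3 ≤ N) (k : ℕ) : (∑ j : Fin k, N ^ (j : ℕ)) ≤ N ^ k / 2 := by
  induction k with
  | zero => norm_num
  | succ k ih =>
    have hNk : (0:ℝ) ≤ N ^ k := by positivity
    rw [Fin.sum_univ_castSucc]
    simp only [Fin.coe_castSucc, Fin.val_last]
    have : N ^ (k+1) = N * N ^ k := by ring
    nlinarith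

lemma cS_nonneg (hN : 3 ≤ N) (hd : 0 < d) (k : ℕ)
    (ℓ : Fin k → ({0, d} : Finset ℝ)) : 0 ≤ cS N d k ℓ := by
  refine Finset.sum_nonneg fun j _ => ?_
  rcases digit_mem (ℓ j) with h | h <;> rw [h] <;> positivity

lemma cS_le (hN : 3 ≤ N) (hd : 0 < d) (k : ℕ)
    (ℓ : Fin k → ({0, d} : Finset ℝ)) : cS N d k ℓ ≤ N ^ k * d / 2 := by
  have h1 : cS N d k ℓ ≤ ∑ j : Fin k, N ^ (j : ℕ) * d := by
    refine Finset.sum_le_sum fun j _ => ?_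
    have hNj : (0:ℝ) ≤ N ^ (j:ℕ) := by positivity
    rcases digit_mem (ℓ j) with h | h <;> rw [h] <;> nlinarith
  have h2 : (∑ j : Fin k, N ^ (j : ℕ) * d) = (∑ j : Fin k, N ^ (j : ℕ)) * d := by
    rw [Finset.sum_mul]
  have := geomSum_le_half hN k
  nlinarith [h1, h2]

lemma cS_snoc (N d : ℝ) (k : ℕ) (y : ({0, d} : Finset ℝ)) (ℓ : Fin k → ({0, d} : Finset ℝ)) :
    cS N d (k+1) (Fin.snocEquiv (fun _ => ({0,d} : Finset ℝ)) (y, ℓ))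
      = cS N d k ℓ + N ^ k * (y : ℝ) := by
  unfold cS
  rw [Fin.sum_univ_castSucc]
  simp [Fin.snocEquiv, Fin.snoc_castSucc, Fin.snoc_last]

lemma cT_succ (N d : ℝ) (hd : d ≠ 0) (k : ℕ) (s : Set ℝ) :
    cT N d (k+1) s = cT N d k s
      + ∑ ℓ : Fin k → ({0, d} : Finset ℝ), s.indicator 1 (cS N d k ℓ + N ^ k * d) := by
  have h : (∑ f : Fin (k+1) → ({0,d} : Finset ℝ), s.indicator (1 : ℝ → ℝ≥0∞) (cS N d (k+1) f))
      = ∑ p : ({0,d} : Finset ℝ) × (Fin k → ({0,d} : Finset ℝ)),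
          s.indicator (1 : ℝ → ℝ≥0∞) (cS N d k p.2 + N ^ k * (p.1 : ℝ)) := by
    exact (Equiv.sum_comp (Fin.snocEquiv (fun _ => ({0,d} : Finset ℝ)))
        (fun f : Fin (k+1) → ({0,d} : Finset ℝ) => s.indicator 1 (cS N d (k+1) f))).symm.trans
      (Finset.sum_congr rfl fun p _ => congrArg (s.indicator 1) (cS_snoc N d k p.1 p.2))
  unfold cT at h ⊢
  rw [h, Fintype.sum_prod_type]
  have h2 : ∀ F : ℝ → ℝ≥0∞, ∑ y : ({0,d} : Finset ℝ), F (y : ℝ) = F 0 + F d := by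
    intro F
    rw [Finset.sum_coe_sort ({0,d} : Finset ℝ) F, Finset.sum_pair (Ne.symm hd)]
  rw [h2 (fun t => ∑ ℓ : Fin k → ({0,d} : Finset ℝ), s.indicator 1 (cS N d k ℓ + N ^ k * t))]
  simp

lemma indic_le_one (s : Set ℝ) (x : ℝ) : s.indicator (1 : ℝ → ℝ≥0∞) x ≤ 1 := by
  classical
  rw [Set.indicator_apply]
  split <;> simp

lemma cT_Icc_le (hN : 3 ≤ N) (hd : 0 < d) :
    ∀ k, ∀ a b : ℝ, a ≤ b → cT N d k (Set.Icc a b) ≤ cT N d k (Set.Icc 0 (b - a)) := by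
  intro k
  induction k with
  | zero =>
    intro a b hab
    refine Finset.sum_le_sum fun ℓ _ => ?_
    have h0 : cS N d 0 ℓ = 0 := by simp [cS]
    rw [h0, Set.indicator_of_mem (Set.mem_Icc.2 ⟨le_refl 0, by linarith⟩)]
    exact (indic_le_one _ _).trans_eq rfl
  | succ k ih =>
    intro a b hab
    have hNpos : (0:ℝ) < N := by linarith
    set c : ℝ := N ^ k * d with hc_def
    have hc : 0 < c := by positivity
    have hS0 : ∀ ℓ, 0 ≤ cS N d k ℓ := cS_nonneg hN hd k
    have hS2 : ∀ ℓ, cS N d k ℓ ≤ c / 2 := fun ℓ => cS_le hN hd k ℓ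
    rw [cT_succ N d hd.ne' k, cT_succ N d hd.ne' k]
    rcases le_or_gt c (b - a) with hL | hL
    · -- Case A : the two translated intervals overlap
      have key : ∀ ℓ : Fin k → ({0,d} : Finset ℝ),
          (Set.Icc a b).indicator (1 : ℝ → ℝ≥0∞) (cS N d k ℓ)
            + (Set.Icc a b).indicator 1 (cS N d k ℓ + c)
          = (Set.Icc (a - c) b).indicator 1 (cS N d k ℓ)
            + (Set.Icc a (b - c)).indicator 1 (cS N d k ℓ) := by
        intro ℓ
        have q1 : cS N d k ℓ + c ∈ Set.Icc a b ↔ a - c ≤ cS N d k ℓ ∧ cS N d k ℓ ≤ b - c := by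
          rw [Set.mem_Icc]; constructor <;> rintro ⟨u, v⟩ <;> constructor <;> linarith
        simp only [Set.indicator_apply, Set.mem_Icc, q1]
        by_cases p1 : a ≤ cS N d k ℓ <;> by_cases p2 : cS N d k ℓ ≤ b <;>
          by_cases p3 : a - c ≤ cS N d k ℓ <;> by_cases p4 : cS N d k ℓ ≤ b - c <;>
          simp [p1, p2, p3, p4] <;> exfalso <;> linarith
      have e4 : ∀ ℓ : Fin k → ({0,d} : Finset ℝ),
          (Set.Icc 0 (b - c - a)).indicator (1 : ℝ → ℝ≥0∞) (cS N d k ℓ)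
            = (Set.Icc 0 (b - a)).indicator 1 (cS N d k ℓ + c) := by
        intro ℓ
        have h0 := hS0 ℓ
        simp only [Set.indicator_apply, Set.mem_Icc]
        by_cases p : cS N d k ℓ ≤ b - c - a
        · rw [if_pos ⟨h0, p⟩, if_pos ⟨by linarith, by linarith⟩]; rfl
        · rw [if_neg fun h => p h.2, if_neg fun h => p (by linarith [h.2])]
      calc cT N d k (Set.Icc a b)
            + ∑ ℓ : Fin k → ({0,d} : Finset ℝ), (Set.Icc a b).indicator 1 (cS N d k ℓ + c)
          = ∑ ℓ : Fin k → ({0,d} : Finset ℝ),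
              ((Set.Icc a b).indicator (1 : ℝ → ℝ≥0∞) (cS N d k ℓ)
                + (Set.Icc a b).indicator 1 (cS N d k ℓ + c)) := by
            unfold cT; rw [Finset.sum_add_distrib]
        _ = ∑ ℓ : Fin k → ({0,d} : Finset ℝ),
              ((Set.Icc (a - c) b).indicator (1 : ℝ → ℝ≥0∞) (cS N d k ℓ)
                + (Set.Icc a (b - c)).indicator 1 (cS N d k ℓ)) :=
            Finset.sum_congr rfl fun ℓ _ => key ℓ
        _ = (∑ ℓ : Fin k → ({0,d} : Finset ℝ),
              (Set.Icc (a - c) b).indicator (1 : ℝ → ℝ≥0∞) (cS N d k ℓ))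
            + ∑ ℓ : Fin k → ({0,d} : Finset ℝ),
              (Set.Icc a (b - c)).indicator 1 (cS N d k ℓ) := Finset.sum_add_distrib
        _ ≤ cT N d k (Set.Icc 0 (b - a))
            + ∑ ℓ : Fin k → ({0,d} : Finset ℝ), (Set.Icc 0 (b - a)).indicator 1 (cS N d k ℓ + c) := by
            refine add_le_add ?_ ?_
            · unfold cT
              refine Finset.sum_le_sum fun ℓ _ => ?_
              rw [Set.indicator_of_mem (Set.mem_Icc.2 ⟨hS0 ℓ, by linarith [hS2 ℓ]⟩)]
              exact indic_le_one _ _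
            · have h1 : (∑ ℓ : Fin k → ({0,d} : Finset ℝ),
                  (Set.Icc a (b - c)).indicator (1 : ℝ → ℝ≥0∞) (cS N d k ℓ))
                  = cT N d k (Set.Icc a (b - c)) := rfl
              rw [h1]
              refine (ih a (b - c) (by linarith)).trans ?_
              unfold cT
              exact le_of_eq (Finset.sum_congr rfl fun ℓ _ => e4 ℓ)
    · -- Case B : the two translated intervals are disjoint
      rcases lt_or_ge b c with hb | hb
      · -- B1 : b < c, the shifted part contributes nothing
        have z : ∀ ℓ : Fin k → ({0,d} : Finset ℝ),
            (Set.Icc a b).indicator (1 : ℝ → ℝ≥0∞) (cS N d k ℓ + c) = 0 := by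
          intro ℓ
          exact Set.indicator_of_notMem
            (fun h => absurd (Set.mem_Icc.1 h).2 (by push_neg; linarith [hS0 ℓ])) _
        calc cT N d k (Set.Icc a b)
              + ∑ ℓ : Fin k → ({0,d} : Finset ℝ), (Set.Icc a b).indicator 1 (cS N d k ℓ + c)
            = cT N d k (Set.Icc a b) := by
              rw [Finset.sum_eq_zero fun ℓ _ => z ℓ, add_zero]
          _ ≤ cT N d k (Set.Icc 0 (b - a)) := ih a b hab
          _ ≤ _ := le_self_add
      · rcases lt_or_ge (c / 2) a with ha | ha
        · -- B2 : a > c/2, the unshifted part contributes nothing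
          have z : cT N d k (Set.Icc a b) = 0 := by
            refine Finset.sum_eq_zero fun ℓ _ => ?_
            exact Set.indicator_of_notMem
              (fun h => absurd (Set.mem_Icc.1 h).1 (by push_neg; linarith [hS2 ℓ])) _
          have e2 : ∀ ℓ : Fin k → ({0,d} : Finset ℝ),
              (Set.Icc a b).indicator (1 : ℝ → ℝ≥0∞) (cS N d k ℓ + c)
                = (Set.Icc (a - c) (b - c)).indicator 1 (cS N d k ℓ) := by
            intro ℓ
            have q1 : cS N d k ℓ + c ∈ Set.Icc a b ↔ cS N d k ℓ ∈ Set.Icc (a - c) (b - c) := by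
              rw [Set.mem_Icc, Set.mem_Icc]
              constructor <;> rintro ⟨u, v⟩ <;> constructor <;> linarith
            simp only [Set.indicator_apply, q1]
            split_ifs <;> rfl
          calc cT N d k (Set.Icc a b)
                + ∑ ℓ : Fin k → ({0,d} : Finset ℝ), (Set.Icc a b).indicator 1 (cS N d k ℓ + c)
              = cT N d k (Set.Icc (a - c) (b - c)) := by
                rw [z, zero_add]
                exact Finset.sum_congr rfl fun ℓ _ => e2 ℓ
            _ ≤ cT N d k (Set.Icc 0 (b - c - (a - c))) := ih (a - c) (b - c) (by linarith)
            _ = cT N d k (Set.Icc 0 (b - a)) := by norm_num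
            _ ≤ _ := le_self_add
        · -- B3 : c ≤ b and a ≤ c/2 : pointwise sum of indicators is at most 1
          have key : ∀ ℓ : Fin k → ({0,d} : Finset ℝ),
              (Set.Icc a b).indicator (1 : ℝ → ℝ≥0∞) (cS N d k ℓ)
                + (Set.Icc a b).indicator 1 (cS N d k ℓ + c)
              ≤ (Set.Icc 0 (b - a)).indicator 1 (cS N d k ℓ) := by
            intro ℓ
            have h0 := hS0 ℓ
            have h2 := hS2 ℓ
            rw [Set.indicator_of_mem (Set.mem_Icc.2 ⟨h0, by linarith⟩)]
            by_cases p : cS N d k ℓ ∈ Set.Icc a b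
            · have : cS N d k ℓ + c ∉ Set.Icc a b := by
                rw [Set.mem_Icc] at p ⊢
                push_neg
                intro
                linarith [p.1]
              rw [Set.indicator_of_mem p, Set.indicator_of_notMem this]
              simp
            · rw [Set.indicator_of_notMem p, zero_add]
              exact indic_le_one _ _
          calc cT N d k (Set.Icc a b)
                + ∑ ℓ : Fin k → ({0,d} : Finset ℝ), (Set.Icc a b).indicator 1 (cS N d k ℓ + c)
              = ∑ ℓ : Fin k → ({0,d} : Finset ℝ),
                  ((Set.Icc a b).indicator (1 : ℝ → ℝ≥0∞) (cS N d k ℓ)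
                    + (Set.Icc a b).indicator 1 (cS N d k ℓ + c)) := by
                unfold cT; rw [Finset.sum_add_distrib]
            _ ≤ cT N d k (Set.Icc 0 (b - a)) := Finset.sum_le_sum fun ℓ _ => key ℓ
            _ ≤ _ := le_self_add

end

noncomputable def cm (N d : ℝ) (k : ℕ) : Measure ℝ :=
  Measure.sum (fun ℓ : Fin k → ({0, d} : Finset ℝ) => Measure.dirac (cS N d k ℓ))

lemma cantorMeasure_eq (N d : ℝ) : cantorMeasure N d = ⨆ k, cm N d k := rfl

lemma cm_apply (N d : ℝ) (k : ℕ) {s : Set ℝ} (hs : MeasurableSet s) :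
    cm N d k s = cT N d k s := by
  rw [cm, Measure.sum_apply _ hs, tsum_fintype]
  exact Finset.sum_congr rfl fun ℓ _ => Measure.dirac_apply' _ hs

lemma cT_mono (N d : ℝ) (hd : d ≠ 0) (s : Set ℝ) : Monotone fun k => cT N d k s :=
  monotone_nat_of_le_succ fun k => by rw [cT_succ N d hd k s]; exact le_self_add

noncomputable def climit (N d : ℝ) (hd : d ≠ 0) : Measure ℝ :=
  Measure.ofMeasurable (fun s _ => ⨆ k, cm N d k s)
    (by simp)
    (fun f hf hdisj => by
      have h1 : ∀ k, cm N d k (⋃ i, f i) = ∑' i, cm N d k (f i) := fun k =>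
        measure_iUnion hdisj hf
      have mono : ∀ i, Monotone fun i_1 => cm N d i_1 (f i) := fun i k1 k2 h => by
        simp only []
        rw [cm_apply N d k1 (hf i), cm_apply N d k2 (hf i)]
        exact cT_mono N d hd _ h
      simp_rw [h1]
      calc (⨆ k, ∑' i, cm N d k (f i))
          = ⨆ k, ⨆ t : Finset ℕ, ∑ i ∈ t, cm N d k (f i) := by
            simp_rw [ENNReal.tsum_eq_iSup_sum]
        _ = ⨆ t : Finset ℕ, ⨆ k, ∑ i ∈ t, cm N d k (f i) := iSup_comm
        _ = ⨆ t : Finset ℕ, ∑ i ∈ t, ⨆ k, cm N d k (f i) :=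
            iSup_congr fun t => (ENNReal.finsetSum_iSup_of_monotone fun i => mono i).symm
        _ = ∑' i, ⨆ k, cm N d k (f i) := ENNReal.tsum_eq_iSup_sum.symm)

lemma climit_apply (N d : ℝ) (hd : d ≠ 0) {s : Set ℝ} (hs : MeasurableSet s) :
    climit N d hd s = ⨆ k, cm N d k s :=
  Measure.ofMeasurable_apply s hs

lemma cm_le_climit (N d : ℝ) (hd : d ≠ 0) (k : ℕ) : cm N d k ≤ climit N d hd :=
  Measure.le_iff.2 fun s hs => by
    rw [climit_apply N d hd hs]
    exact le_iSup (fun k => cm N d k s) k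


/-- **Lemma.** Let `N ≥ 3` be real and `d > 0`, and let `μ` be the limit measure associated
with the dilation `N` and digit set `{0, d}`. Then for all reals `a ≤ b`,
`μ([a,b]) ≤ μ([0, b−a])`. -/
theorem cantorMeasure_Icc_le (N d : ℝ) (hN : 3 ≤ N) (hd : 0 < d) :
    ∀ a b : ℝ, a ≤ b →
      cantorMeasure N d (Set.Icc a b) ≤ cantorMeasure N d (Set.Icc 0 (b - a)) := by
  intro a b hab
  have hA : MeasurableSet (Set.Icc a b) := measurableSet_Icc
  have hB : MeasurableSet (Set.Icc 0 (b - a)) := measurableSet_Icc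
  have h1 : cantorMeasure N d ≤ climit N d hd.ne' := by
    rw [cantorMeasure_eq]
    exact iSup_le fun k => cm_le_climit N d hd.ne' k
  calc cantorMeasure N d (Set.Icc a b)
      ≤ climit N d hd.ne' (Set.Icc a b) := Measure.le_iff'.1 h1 _
    _ = ⨆ k, cm N d k (Set.Icc a b) := climit_apply N d hd.ne' hA
    _ ≤ ⨆ k, cm N d k (Set.Icc 0 (b - a)) := by
        refine iSup_mono fun k => ?_
        rw [cm_apply N d k hA, cm_apply N d k hB]
        exact cT_Icc_le hN hd k a b hab
    _ ≤ cantorMeasure N d (Set.Icc 0 (b - a)) := by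
        refine iSup_le fun k => ?_
        have : cm N d k ≤ cantorMeasure N d := by
          rw [cantorMeasure_eq]
          exact le_iSup (fun k => cm N d k) k
        exact Measure.le_iff'.1 this _
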